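/- Let n ≥ 2, J, g ∈ ℝ, and let H be the 2^n × 2^n transverse-field Ising Hamiltonian H = −J ( Σ_{i=0}^{n-2} Z_i Z_{i+1} + g Σ_{i=0}^{n-1} X_i ), where X_i, Z_i are the Pauli-string matrices acting as Pauli X (respectively Z) on site i and identity elsewhere. Let l ≥ 0 and let U = U_l ⋯ U_1 be a product of l brick-wall layers on n qubits. Then the number of Pauli strings P : Fin n → Fin 4 with Tr(σ^P · U* H U) ≠ 0 is at most n · 4^{2+2l}. -/

import Mathlib

open Matrix

/-- The four single-qubit Pauli matrices: `σ₀ = I`, `σ₁ = X`, `σ₂ = Y`, `σ₃ = Z`. -/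
noncomputable def pauli : Fin 4 → Matrix (Fin 2) (Fin 2) ℂ :=
  ![1, !![0, 1; 1, 0], !![0, -Complex.I; Complex.I, 0], !![1, 0; 0, -1]]

/-- The `2^n × 2^n` matrix associated to a Pauli string `P : Fin n → Fin 4`:
the `n`-fold Kronecker product of the single-site Pauli matrices `σ_{P i}`. -/
noncomputable def pauliString (n : ℕ) (P : Fin n → Fin 4) :
    Matrix (Fin n → Fin 2) (Fin n → Fin 2) ℂ :=
  Matrix.of fun x y => ∏ i, pauli (P i) (x i) (y i)

/-- Pauli `X` acting on site `i` and identity elsewhere. -/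
noncomputable def pauliX (n : ℕ) (i : Fin n) : Matrix (Fin n → Fin 2) (Fin n → Fin 2) ℂ :=
  pauliString n (Function.update (fun _ => 0) i 1)

/-- Pauli `Z` acting on site `i` and identity elsewhere. -/
noncomputable def pauliZ (n : ℕ) (i : Fin n) : Matrix (Fin n → Fin 2) (Fin n → Fin 2) ℂ :=
  pauliString n (Function.update (fun _ => 0) i 3)

/-- A matrix `A` indexed by `Fin n → Fin 2` is *supported on* `S ⊆ Fin n` if, under the
canonical index equivalence `(Fin n → Fin 2) ≃ (S → Fin 2) × (Sᶜ → Fin 2)`, it is the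
Kronecker product `B ⊗ 1` of some matrix `B` indexed by `S → Fin 2` with the identity
on the remaining sites. -/
def supportedOn {n : ℕ} (S : Finset (Fin n))
    (A : Matrix (Fin n → Fin 2) (Fin n → Fin 2) ℂ) : Prop :=
  ∃ B : Matrix ({i : Fin n // i ∈ S} → Fin 2) ({i : Fin n // i ∈ S} → Fin 2) ℂ,
    A = Matrix.of fun x y =>
      Matrix.kroneckerMap (· * ·) B
        (1 : Matrix ({i : Fin n // ¬ i ∈ S} → Fin 2) ({i : Fin n // ¬ i ∈ S} → Fin 2) ℂ)
        ((Equiv.piEquivPiSubtypeProd (· ∈ S) fun _ => Fin 2) x)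
        ((Equiv.piEquivPiSubtypeProd (· ∈ S) fun _ => Fin 2) y)

/-- A *brick-wall layer* on `n` qubits: a product of finitely many unitary matrices, each
supported on a pair `{i, i+1}` of adjacent sites, with the pairs pairwise disjoint. -/
def IsBrickWallLayer {n : ℕ} (U : Matrix (Fin n → Fin 2) (Fin n → Fin 2) ℂ) : Prop :=
  ∃ gates : List (Matrix (Fin n → Fin 2) (Fin n → Fin 2) ℂ × Finset (Fin n)),
    U = (gates.map Prod.fst).prod ∧
    (∀ p ∈ gates, p.1 ∈ Matrix.unitaryGroup (Fin n → Fin 2) ℂ) ∧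
    (∀ p ∈ gates, ∃ (m : ℕ) (h : m + 1 < n),
      p.2 = ({⟨m, Nat.lt_of_succ_lt h⟩, ⟨m + 1, h⟩} : Finset (Fin n)) ∧
      supportedOn p.2 p.1) ∧
    (gates.map Prod.snd).Pairwise Disjoint

/-- The transverse-field Ising Hamiltonian
`H = −J (Σ_{i=0}^{n-2} Z_i Z_{i+1} + g Σ_{i=0}^{n-1} X_i)` on `n` qubits. -/
noncomputable def isingHamiltonian (n : ℕ) (J g : ℝ) :
    Matrix (Fin n → Fin 2) (Fin n → Fin 2) ℂ :=
  (-(J : ℂ)) •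
    ((∑ i : Fin n, if h : (i : ℕ) + 1 < n then
        pauliZ n i * pauliZ n ⟨(i : ℕ) + 1, h⟩ else 0) +
      (g : ℂ) • ∑ i : Fin n, pauliX n i)


variable {n : ℕ}

def Supp (S : Finset (Fin n)) (A : Matrix (Fin n → Fin 2) (Fin n → Fin 2) ℂ) : Prop :=
  (∀ x y, A x y ≠ 0 → ∀ i ∉ S, x i = y i) ∧
  (∀ x x' y y', (∀ i ∈ S, x i = x' i) → (∀ i ∈ S, y i = y' i) →
    (∀ i ∉ S, x i = y i) → (∀ i ∉ S, x' i = y' i) → A x y = A x' y')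

lemma supp_zero (S : Finset (Fin n)) : Supp S (0 : Matrix (Fin n → Fin 2) (Fin n → Fin 2) ℂ) :=
  ⟨fun x y h => absurd rfl h, fun _ _ _ _ _ _ _ _ => rfl⟩

lemma supp_mono {S S' : Finset (Fin n)} {A} (hSS : S ⊆ S') (h : Supp S A) : Supp S' A := by
  obtain ⟨h1, h2⟩ := h
  constructor
  · intro x y hxy i hi
    exact h1 x y hxy i (fun hiS => hi (hSS hiS))
  · intro x x' y y' hx hy hxy hx'y'
    by_cases hout : ∀ i ∉ S, x i = y i
    · by_cases hout' : ∀ i ∉ S, x' i = y' i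
      · exact h2 x x' y y' (fun i hi => hx i (hSS hi)) (fun i hi => hy i (hSS hi)) hout hout'
      · push_neg at hout'
        obtain ⟨i, hiS, hne⟩ := hout'
        -- i ∉ S; if i ∉ S' then contradiction with hx'y'
        by_cases hiS' : i ∈ S'
        · exact absurd ((hx i hiS').symm.trans ((hout i hiS).trans (hy i hiS'))) hne
        · exact absurd (hx'y' i hiS') hne
    · push_neg at hout
      obtain ⟨i, hiS, hne⟩ := hout
      have hiS' : i ∈ S' := by
        by_contra hiS'
        exact hne (hxy i hiS')
      have hne' : x' i ≠ y' i := by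
        rw [← hx i hiS', ← hy i hiS']; exact hne
      have hz : A x y = 0 := by
        by_contra hc; exact hne (h1 x y hc i hiS)
      have hz' : A x' y' = 0 := by
        by_contra hc; exact hne' (h1 x' y' hc i hiS)
      rw [hz, hz']

lemma supp_star {S : Finset (Fin n)} {A} (h : Supp S A) : Supp S (star A) := by
  obtain ⟨h1, h2⟩ := h
  constructor
  · intro x y hxy i hi
    have : A y x ≠ 0 := by
      intro hc
      apply hxy
      show Aᴴ x y = 0
      simp [Matrix.conjTranspose_apply, hc]
    exact (h1 y x this i hi).symm
  · intro x x' y y' hx hy hxy hx'y'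
    show Aᴴ x y = Aᴴ x' y'
    simp only [Matrix.conjTranspose_apply]
    rw [h2 y y' x x' hy hx (fun i hi => (hxy i hi).symm) (fun i hi => (hx'y' i hi).symm)]

private lemma f2aa : ∀ a : Fin 2, a + a = 0 := by decide
private lemma f2_1 : ∀ a b : Fin 2, a + (a + b) = b := by decide
private lemma f2_2 : ∀ a b : Fin 2, a + (b + a) = b := by decide
private lemma f2_3 : ∀ a b c : Fin 2, a ≠ b → a + (b + c) ≠ c := by decide
private lemma f2_4 : ∀ a b c : Fin 2, a + (b + c) = c → a = b := by decide
private lemma f2_5 : ∀ a b c : Fin 2, a = b + (a + c) → b = c := by decide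
private lemma f2_z : ∀ a : Fin 2, a + 0 = a := by decide

private lemma invol (c : Fin n → Fin 2) :
    Function.Involutive (fun z : Fin n → Fin 2 => fun i => z i + c i) := by
  intro z; funext i; simp only []
  show z i + c i + c i = z i
  rw [add_assoc, f2aa, f2_z]

lemma supp_mul {S : Finset (Fin n)} {A B} (hA : Supp S A) (hB : Supp S B) :
    Supp S (A * B) := by
  constructor
  · intro x y h i hi
    rw [Matrix.mul_apply] at h
    obtain ⟨z, _, hz⟩ := Finset.exists_ne_zero_of_sum_ne_zero h
    have h1 : A x z ≠ 0 := fun hc => hz (by rw [hc, zero_mul])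
    have h2 : B z y ≠ 0 := fun hc => hz (by rw [hc, mul_zero])
    exact (hA.1 x z h1 i hi).trans (hB.1 z y h2 i hi)
  · intro x x' y y' hx hy hxy hx'y'
    rw [Matrix.mul_apply, Matrix.mul_apply]
    set c : Fin n → Fin 2 := fun i => if i ∈ S then 0 else x i + x' i with hc
    set F := fun z : Fin n → Fin 2 => fun i => z i + c i with hF
    have hFin : Function.Involutive F := invol c
    have key : ∀ z, A x z * B z y = A x' (F z) * B (F z) y' := by
      intro z
      have hFS : ∀ i ∈ S, F z i = z i := by
        intro i hi; show z i + c i = z i; rw [hc]; simp [hi, f2_z]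
      by_cases hz : ∀ i ∉ S, z i = x i
      · have hFz : ∀ i ∉ S, F z i = x' i := by
          intro i hi
          show z i + c i = x' i
          rw [hc]; simp only [hi, if_neg hi, hz i hi]
          exact f2_1 (x i) (x' i)
        have e1 : A x z = A x' (F z) :=
          hA.2 x x' z (F z) hx (fun i hi => (hFS i hi).symm)
            (fun i hi => (hz i hi).symm) (fun i hi => (hFz i hi).symm)
        have e2 : B z y = B (F z) y' :=
          hB.2 z (F z) y y' (fun i hi => (hFS i hi).symm) hy
            (fun i hi => (hz i hi).trans (hxy i hi)) (fun i hi => (hFz i hi).trans (hx'y' i hi))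
        rw [e1, e2]
      · push_neg at hz
        obtain ⟨i, hi, hne⟩ := hz
        have hz1 : A x z = 0 := by
          by_contra hcon; exact hne (hA.1 x z hcon i hi).symm
        have hz2 : A x' (F z) = 0 := by
          by_contra hcon
          have := (hA.1 x' (F z) hcon i hi).symm
          have : z i + c i = x' i := this
          rw [hc] at this; simp only [if_neg hi] at this
          exact f2_3 (z i) (x i) (x' i) hne this
        rw [hz1, hz2, zero_mul, zero_mul]
    calc ∑ z, A x z * B z y = ∑ z, A x' (F z) * B (F z) y' :=
          Finset.sum_congr rfl (fun z _ => key z)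
      _ = ∑ z, A x' z * B z y' := Equiv.sum_comp hFin.toPerm (fun z => A x' z * B z y')

lemma supp_commute {S T : Finset (Fin n)} {A B} (hA : Supp S A) (hB : Supp T B)
    (hd : Disjoint S T) : A * B = B * A := by
  have hST : ∀ i : Fin n, i ∈ S → i ∉ T := fun i hi hit =>
    (Finset.disjoint_left.mp hd hi) hit
  have hTS : ∀ i : Fin n, i ∈ T → i ∉ S := fun i hi his => (hST i his) hi
  ext x y
  rw [Matrix.mul_apply, Matrix.mul_apply]
  set c : Fin n → Fin 2 := fun i => if i ∈ S ∨ i ∈ T then x i + y i else 0 with hc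
  set F := fun z : Fin n → Fin 2 => fun i => z i + c i with hF
  have hFin : Function.Involutive F := invol c
  have key : ∀ z, A x z * B z y = B x (F z) * A (F z) y := by
    intro z
    by_cases h1 : (∀ i ∉ S, x i = z i) ∧ (∀ i ∉ T, z i = y i)
    · obtain ⟨hxz, hzy⟩ := h1
      -- facts about F z
      have hFzS : ∀ i ∈ S, F z i = x i := by
        intro i hi
        show z i + c i = x i
        rw [hc]; simp only [hi, true_or, if_pos]
        rw [hzy i (hST i hi)]; exact f2_2 (y i) (x i)
      have hFzT : ∀ i ∈ T, F z i = y i := by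
        intro i hi
        show z i + c i = y i
        rw [hc]; simp only [hi, or_true, if_pos]
        rw [← hxz i (hTS i hi)]; exact f2_1 (x i) (y i)
      have hFzO : ∀ i, i ∉ S → i ∉ T → F z i = z i := by
        intro i hiS hiT
        show z i + c i = z i
        rw [hc]; simp only [hiS, hiT, or_self, if_neg, f2_z]
        exact f2_z (z i)
      have e1 : B z y = B x (F z) := by
        apply hB.2 z x y (F z)
        · intro i hi; rw [hxz i (hTS i hi)]
        · intro i hi; rw [hFzT i hi]
        · exact hzy
        · intro i hi
          by_cases hiS : i ∈ S
          · rw [hFzS i hiS]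
          · rw [hFzO i hiS hi]; exact hxz i hiS
      have e2 : A x z = A (F z) y := by
        apply hA.2 x (F z) z y
        · intro i hi; rw [hFzS i hi]
        · intro i hi; rw [hzy i (hST i hi)]
        · exact hxz
        · intro i hi
          by_cases hiT : i ∈ T
          · rw [hFzT i hiT]
          · rw [hFzO i hi hiT]; exact hzy i hiT
      rw [e2, e1, mul_comm]
    · have hL : A x z * B z y = 0 := by
        rcases not_and_or.mp h1 with h | h
        · push_neg at h; obtain ⟨i, hi, hne⟩ := h
          have : A x z = 0 := by by_contra hcon; exact hne (hA.1 x z hcon i hi)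
          rw [this, zero_mul]
        · push_neg at h; obtain ⟨i, hi, hne⟩ := h
          have : B z y = 0 := by by_contra hcon; exact hne (hB.1 z y hcon i hi)
          rw [this, mul_zero]
      have hR : B x (F z) * A (F z) y = 0 := by
        by_contra hcon
        have hB1 : B x (F z) ≠ 0 := fun hc => hcon (by rw [hc, zero_mul])
        have hA1 : A (F z) y ≠ 0 := fun hc => hcon (by rw [hc, mul_zero])
        have hbb : ∀ i ∉ T, x i = F z i := hB.1 x (F z) hB1
        have haa : ∀ i ∉ S, F z i = y i := hA.1 (F z) y hA1
        apply h1
        constructor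
        · intro i hiS
          by_cases hiT : i ∈ T
          · have hcval : F z i = z i + (x i + y i) := by
              show z i + c i = z i + (x i + y i)
              rw [hc]; simp [hiT]
            have hfz : z i + (x i + y i) = y i := hcval.symm.trans (haa i hiS)
            exact (f2_4 (z i) (x i) (y i) hfz).symm
          · have h' := hbb i hiT
            have : F z i = z i := by
              show z i + c i = z i; rw [hc]; simp [hiS, hiT, f2_z]
            rw [this] at h'; exact h'
        · intro i hiT
          by_cases hiS : i ∈ S
          · have hcval : F z i = z i + (x i + y i) := by
              show z i + c i = z i + (x i + y i)
              rw [hc]; simp [hiS]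
            have hfz : x i = z i + (x i + y i) := (hbb i hiT).trans hcval
            exact f2_5 (x i) (z i) (y i) hfz
          · have h1' := hbb i hiT
            have h2' := haa i hiS
            have : F z i = z i := by
              show z i + c i = z i; rw [hc]; simp [hiS, hiT, f2_z]
            rw [this] at h1' h2'
            exact h2'
      rw [hL, hR]
  calc ∑ z, A x z * B z y = ∑ z, B x (F z) * A (F z) y :=
        Finset.sum_congr rfl (fun z _ => key z)
    _ = ∑ z, B x z * A z y := Equiv.sum_comp hFin.toPerm (fun z => B x z * A z y)

lemma pauli_zero_apply (a b : Fin 2) : pauli 0 a b = if a = b then 1 else 0 := by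
  show (1 : Matrix (Fin 2) (Fin 2) ℂ) a b = _
  rw [Matrix.one_apply]

lemma supp_pauliString {S : Finset (Fin n)} {P : Fin n → Fin 4}
    (hP : ∀ i ∉ S, P i = 0) : Supp S (pauliString n P) := by
  constructor
  · intro x y h i hi
    have hf : pauli (P i) (x i) (y i) ≠ 0 := by
      intro hc
      exact h (Finset.prod_eq_zero (Finset.mem_univ i) hc)
    rw [hP i hi, pauli_zero_apply] at hf
    by_contra hne
    rw [if_neg hne] at hf
    exact hf rfl
  · intro x x' y y' hx hy hxy hx'y'
    show ∏ i, pauli (P i) (x i) (y i) = ∏ i, pauli (P i) (x' i) (y' i)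
    apply Finset.prod_congr rfl
    intro i _
    by_cases hi : i ∈ S
    · rw [hx i hi, hy i hi]
    · rw [hP i hi, pauli_zero_apply, pauli_zero_apply, if_pos (hxy i hi), if_pos (hx'y' i hi)]

lemma supp_one (S : Finset (Fin n)) :
    Supp S (1 : Matrix (Fin n → Fin 2) (Fin n → Fin 2) ℂ) := by
  constructor
  · intro x y h i _
    by_contra hne
    exact h (Matrix.one_apply_ne (fun hc => hne (congrFun hc i)))
  · intro x x' y y' hx hy hxy hx'y'
    by_cases h : x = y
    · have h' : x' = y' := by
        funext i
        by_cases hi : i ∈ S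
        · rw [← hx i hi, ← hy i hi, congrFun h i]
        · exact hx'y' i hi
      rw [h, h', Matrix.one_apply_eq, Matrix.one_apply_eq]
    · have h' : x' ≠ y' := by
        intro hc
        apply h
        funext i
        by_cases hi : i ∈ S
        · rw [hx i hi, hy i hi, congrFun hc i]
        · exact hxy i hi
      rw [Matrix.one_apply_ne h, Matrix.one_apply_ne h']

lemma supp_of_supportedOn {S : Finset (Fin n)} {A} (h : supportedOn S A) : Supp S A := by
  obtain ⟨B, rfl⟩ := h
  have key : ∀ x y : Fin n → Fin 2,
      (Matrix.of fun x y =>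
        Matrix.kroneckerMap (· * ·) B
          (1 : Matrix ({i : Fin n // ¬ i ∈ S} → Fin 2) ({i : Fin n // ¬ i ∈ S} → Fin 2) ℂ)
          ((Equiv.piEquivPiSubtypeProd (· ∈ S) fun _ => Fin 2) x)
          ((Equiv.piEquivPiSubtypeProd (· ∈ S) fun _ => Fin 2) y)) x y
      = B (fun j : {i : Fin n // i ∈ S} => x j.1) (fun j : {i : Fin n // i ∈ S} => y j.1) *
        (1 : Matrix ({i : Fin n // ¬ i ∈ S} → Fin 2) ({i : Fin n // ¬ i ∈ S} → Fin 2) ℂ)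
          (fun j : {i : Fin n // ¬ i ∈ S} => x j.1) (fun j : {i : Fin n // ¬ i ∈ S} => y j.1) := by
    intro x y
    simp [Matrix.kroneckerMap_apply, Equiv.piEquivPiSubtypeProd]
  constructor
  · intro x y h i hi
    rw [key] at h
    have h2 : (1 : Matrix ({i : Fin n // ¬ i ∈ S} → Fin 2) _ ℂ)
        (fun j : {i : Fin n // ¬ i ∈ S} => x j.1) (fun j : {i : Fin n // ¬ i ∈ S} => y j.1) ≠ 0 := by
      intro hc; rw [hc, mul_zero] at h; exact h rfl
    by_contra hne
    exact h2 (Matrix.one_apply_ne (fun hc => hne (congrFun hc ⟨i, hi⟩)))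
  · intro x x' y y' hx hy hxy hx'y'
    rw [key, key]
    have e1 : (fun j : {i : Fin n // i ∈ S} => x j.1) = fun j : {i : Fin n // i ∈ S} => x' j.1 := by
      funext j; exact hx j.1 j.2
    have e2 : (fun j : {i : Fin n // i ∈ S} => y j.1) = fun j : {i : Fin n // i ∈ S} => y' j.1 := by
      funext j; exact hy j.1 j.2
    have e3 : (fun j : {i : Fin n // ¬ i ∈ S} => x j.1) = fun j : {i : Fin n // ¬ i ∈ S} => y j.1 := by
      funext j; exact hxy j.1 j.2
    have e4 : (fun j : {i : Fin n // ¬ i ∈ S} => x' j.1) = fun j : {i : Fin n // ¬ i ∈ S} => y' j.1 := by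
      funext j; exact hx'y' j.1 j.2
    rw [e1, e2, e3, e4]
    rw [Matrix.one_apply_eq, Matrix.one_apply_eq]

private lemma f2aa' : ∀ a : Fin 2, a + 1 + 1 = a := by decide

lemma pauli_diag_zero : ∀ (a : Fin 4), a = 1 ∨ a = 2 → ∀ b : Fin 2, pauli a b b = 0 := by
  intro a ha b
  rcases ha with rfl | rfl <;> fin_cases b <;> simp [pauli]

lemma pauli_Z_flip : ∀ b : Fin 2, pauli 3 (b + 1) (b + 1) = - pauli 3 b b := by
  intro b; fin_cases b <;> simp [pauli]

lemma trace_pauliString_eq_zero {S : Finset (Fin n)} {M} (hM : Supp S M)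
    {P : Fin n → Fin 4} {j : Fin n} (hj : j ∉ S) (hPj : P j ≠ 0) :
    (pauliString n P * M).trace = 0 := by
  have htr : (pauliString n P * M).trace
      = ∑ p : (Fin n → Fin 2) × (Fin n → Fin 2),
          (∏ i, pauli (P i) (p.1 i) (p.2 i)) * M p.2 p.1 := by
    rw [Matrix.trace, Fintype.sum_prod_type]
    apply Finset.sum_congr rfl
    intro x _
    rw [Matrix.diag, Matrix.mul_apply]
    rfl
  have hcases : P j = 1 ∨ P j = 2 ∨ P j = 3 := by
    revert hPj; exact (by decide : ∀ a : Fin 4, a ≠ 0 → a = 1 ∨ a = 2 ∨ a = 3) (P j)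
  rcases hcases with h12 | h12 | h3
  -- X or Y on site j : zero diagonal
  case _ | _ =>
    rw [htr]
    apply Finset.sum_eq_zero
    intro p _
    by_cases hMz : M p.2 p.1 = 0
    · rw [hMz, mul_zero]
    · have hzz : p.2 j = p.1 j := hM.1 p.2 p.1 hMz j hj
      have : pauli (P j) (p.1 j) (p.2 j) = 0 := by
        rw [hzz]
        apply pauli_diag_zero
        first
        | exact Or.inl h12
        | exact Or.inr h12
      rw [Finset.prod_eq_zero (Finset.mem_univ j) this, zero_mul]
  -- Z on site j : pair up by flipping bit j
  · set φ : (Fin n → Fin 2) → (Fin n → Fin 2) :=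
      fun x => Function.update x j (x j + 1) with hφ
    have hφinv : Function.Involutive φ := by
      intro x
      funext i
      by_cases hij : i = j
      · subst hij
        simp [hφ, Function.update_self, f2aa']
      · simp [hφ, Function.update_of_ne hij]
    set Φ : ((Fin n → Fin 2) × (Fin n → Fin 2)) → ((Fin n → Fin 2) × (Fin n → Fin 2)) :=
      fun p => (φ p.1, φ p.2) with hΦ
    have hΦinv : Function.Involutive Φ := by
      intro p; simp [hΦ, hφinv p.1, hφinv p.2]
    set g : ((Fin n → Fin 2) × (Fin n → Fin 2)) → ℂ :=
      fun p => (∏ i, pauli (P i) (p.1 i) (p.2 i)) * M p.2 p.1 with hg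
    have hneg : ∀ p, g (Φ p) = - g p := by
      rintro ⟨x, z⟩
      show (∏ i, pauli (P i) (φ x i) (φ z i)) * M (φ z) (φ x)
          = -((∏ i, pauli (P i) (x i) (z i)) * M z x)
      by_cases hoff : ∀ i ∉ S, z i = x i
      · have hMeq : M (φ z) (φ x) = M z x := by
          symm
          apply hM.2 z (φ z) x (φ x)
          · intro i hi
            have hij : i ≠ j := fun hc => hj (hc ▸ hi)
            simp [hφ, Function.update_of_ne hij]
          · intro i hi
            have hij : i ≠ j := fun hc => hj (hc ▸ hi)
            simp [hφ, Function.update_of_ne hij]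
          · exact hoff
          · intro i hi
            by_cases hij : i = j
            · subst hij
              simp [hφ, Function.update_self, hoff _ hj]
            · simp [hφ, Function.update_of_ne hij, hoff i hi]
        have hprod : (∏ i, pauli (P i) (φ x i) (φ z i))
            = - ∏ i, pauli (P i) (x i) (z i) := by
          rw [← Finset.mul_prod_erase Finset.univ _ (Finset.mem_univ j),
              ← Finset.mul_prod_erase Finset.univ (fun i => pauli (P i) (x i) (z i))
                (Finset.mem_univ j)]
          have hrest : ∏ i ∈ Finset.univ.erase j, pauli (P i) (φ x i) (φ z i)
              = ∏ i ∈ Finset.univ.erase j, pauli (P i) (x i) (z i) := by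
            apply Finset.prod_congr rfl
            intro i hi
            have hij : i ≠ j := Finset.ne_of_mem_erase hi
            simp [hφ, Function.update_of_ne hij]
          rw [hrest]
          have hzx : z j = x j := hoff j hj
          have hjj : pauli (P j) (φ x j) (φ z j) = - pauli (P j) (x j) (z j) := by
            simp only [hφ, Function.update_self]
            rw [hzx, h3, pauli_Z_flip]
          rw [hjj, neg_mul]
        rw [hprod, hMeq, neg_mul]
      · push_neg at hoff
        obtain ⟨i, hi, hne⟩ := hoff
        have hM1 : M z x = 0 := by
          by_contra hc; exact hne (hM.1 z x hc i hi)
        have hM2 : M (φ z) (φ x) = 0 := by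
          by_contra hc
          have heq := hM.1 (φ z) (φ x) hc i hi
          by_cases hij : i = j
          · subst hij
            simp only [hφ, Function.update_self] at heq
            apply hne
            have h2 : z i + 1 + 1 = x i + 1 + 1 := by rw [heq]
            rwa [f2aa', f2aa'] at h2
          · simp only [hφ, Function.update_of_ne hij] at heq
            exact hne heq
        rw [hM1, hM2, mul_zero, mul_zero, neg_zero]
    have hsum : ∑ p, g p = - ∑ p, g p := by
      conv_lhs => rw [← Equiv.sum_comp hΦinv.toPerm g]
      rw [← Finset.sum_neg_distrib]
      exact Finset.sum_congr rfl (fun p _ => hneg p)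
    rw [htr]
    exact add_self_eq_zero.mp (eq_neg_iff_add_eq_zero.mp hsum)

lemma conj_cancel {S T : Finset (Fin n)} {A G} (hA : Supp S A) (hG : Supp T G)
    (hd : Disjoint S T) (hu : G ∈ Matrix.unitaryGroup (Fin n → Fin 2) ℂ) :
    star G * A * G = A := by
  have hcomm : A * G = G * A := supp_commute hA hG hd
  calc star G * A * G = star G * (A * G) := by rw [mul_assoc]
    _ = star G * (G * A) := by rw [hcomm]
    _ = (star G * G) * A := by rw [mul_assoc]
    _ = A := by rw [(Unitary.mem_iff.mp hu).1, one_mul]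

def grow (S : Finset (Fin n)) : Finset (Fin n) :=
  Finset.univ.filter (fun j => ∃ a ∈ S, (a : ℕ) ≤ (j : ℕ) + 1 ∧ (j : ℕ) ≤ (a : ℕ) + 1)

lemma subset_grow (S : Finset (Fin n)) : S ⊆ grow S := by
  intro j hj
  simp only [grow, Finset.mem_filter, Finset.mem_univ, true_and]
  exact ⟨j, hj, Nat.le_succ _, Nat.le_succ _⟩

lemma supp_conj_gates (S : Finset (Fin n)) :
    ∀ (L : List (Matrix (Fin n → Fin 2) (Fin n → Fin 2) ℂ × Finset (Fin n)))
      (A : Matrix (Fin n → Fin 2) (Fin n → Fin 2) ℂ) (T : Finset (Fin n)),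
    (∀ p ∈ L, p.1 ∈ Matrix.unitaryGroup (Fin n → Fin 2) ℂ) →
    (∀ p ∈ L, ∃ (m : ℕ) (h : m + 1 < n),
      p.2 = ({⟨m, Nat.lt_of_succ_lt h⟩, ⟨m + 1, h⟩} : Finset (Fin n)) ∧
      supportedOn p.2 p.1) →
    ((L.map Prod.snd).Pairwise Disjoint) →
    (∀ p ∈ L, Disjoint p.2 T) →
    Supp (S ∪ T) A →
    Supp (grow S ∪ T) (star (L.map Prod.fst).prod * A * (L.map Prod.fst).prod) := by
  intro L
  induction L with
  | nil =>
    intro A T _ _ _ _ hA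
    simp only [List.map_nil, List.prod_nil, star_one, one_mul, mul_one]
    exact supp_mono (Finset.union_subset_union (subset_grow S) (le_refl T)) hA
  | cons p L ih =>
    intro A T hu hs hpw hdT hA
    have hu' : ∀ q ∈ L, q.1 ∈ Matrix.unitaryGroup (Fin n → Fin 2) ℂ :=
      fun q hq => hu q (List.mem_cons_of_mem p hq)
    have hs' : ∀ q ∈ L, ∃ (m : ℕ) (h : m + 1 < n),
        q.2 = ({⟨m, Nat.lt_of_succ_lt h⟩, ⟨m + 1, h⟩} : Finset (Fin n)) ∧
        supportedOn q.2 q.1 := fun q hq => hs q (List.mem_cons_of_mem p hq)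
    rw [List.map_cons, List.pairwise_cons] at hpw
    obtain ⟨hphead, hpw'⟩ := hpw
    have hGsupp : Supp p.2 p.1 :=
      supp_of_supportedOn (hs p (List.mem_cons_self)).choose_spec.choose_spec.2
    have huh : p.1 ∈ Matrix.unitaryGroup (Fin n → Fin 2) ℂ := hu p (List.mem_cons_self)
    have key : star ((List.map Prod.fst (p :: L)).prod) * A * (List.map Prod.fst (p :: L)).prod
        = star (List.map Prod.fst L).prod * (star p.1 * A * p.1) * (List.map Prod.fst L).prod := by
      rw [List.map_cons, List.prod_cons, Matrix.star_mul]
      noncomm_ring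
    rw [key]
    by_cases hdis : Disjoint p.2 (S ∪ T)
    · have hc : star p.1 * A * p.1 = A := conj_cancel hA hGsupp hdis.symm huh
      rw [hc]
      exact ih A T hu' hs' hpw' (fun q hq => hdT q (List.mem_cons_of_mem p hq)) hA
    · -- p.2 intersects S
      have hintS : ¬ Disjoint p.2 S := by
        intro hc
        exact hdis (Finset.disjoint_union_right.mpr ⟨hc, hdT p (List.mem_cons_self)⟩)
      have hA' : Supp (S ∪ (T ∪ p.2)) (star p.1 * A * p.1) := by
        have hsub : S ∪ T ⊆ S ∪ (T ∪ p.2) := by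
          intro j hj
          rcases Finset.mem_union.mp hj with h | h
          · exact Finset.mem_union_left _ h
          · exact Finset.mem_union_right _ (Finset.mem_union_left _ h)
        have hsub2 : p.2 ⊆ S ∪ (T ∪ p.2) := fun j hj =>
          Finset.mem_union_right _ (Finset.mem_union_right _ hj)
        exact supp_mul (supp_mul (supp_star (supp_mono hsub2 hGsupp)) (supp_mono hsub hA))
          (supp_mono hsub2 hGsupp)
      have hdT' : ∀ q ∈ L, Disjoint q.2 (T ∪ p.2) := by
        intro q hq
        refine Finset.disjoint_union_right.mpr ⟨hdT q (List.mem_cons_of_mem p hq), ?_⟩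
        exact (hphead q.2 (List.mem_map_of_mem (f := Prod.snd) hq)).symm
      have hres := ih (star p.1 * A * p.1) (T ∪ p.2) hu' hs' hpw' hdT' hA'
      -- p.2 ⊆ grow S
      have hp2grow : p.2 ⊆ grow S := by
        obtain ⟨a, hap, haS⟩ := Finset.not_disjoint_iff.mp hintS
        obtain ⟨m, hm, hpeq, _⟩ := hs p (List.mem_cons_self)
        intro j hj
        simp only [grow, Finset.mem_filter, Finset.mem_univ, true_and]
        refine ⟨a, haS, ?_, ?_⟩ <;>
        · rw [hpeq] at hap hj
          simp only [Finset.mem_insert, Finset.mem_singleton] at hap hj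
          rcases hap with rfl | rfl <;> rcases hj with rfl | rfl <;> simp <;> omega
      apply supp_mono ?_ hres
      intro j hj
      rcases Finset.mem_union.mp hj with h | h
      · exact Finset.mem_union_left _ h
      · rcases Finset.mem_union.mp h with h' | h'
        · exact Finset.mem_union_right _ h'
        · exact Finset.mem_union_left _ (hp2grow h')

lemma supp_conj_layer {U : Matrix (Fin n → Fin 2) (Fin n → Fin 2) ℂ} {S : Finset (Fin n)} {A}
    (hU : IsBrickWallLayer U) (hA : Supp S A) : Supp (grow S) (star U * A * U) := by
  obtain ⟨L, rfl, hu, hs, hd⟩ := hU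
  have := supp_conj_gates S L A ∅ hu hs hd (fun p _ => Finset.disjoint_empty_right _)
    (by rwa [Finset.union_empty])
  rwa [Finset.union_empty] at this

def itv (i : Fin n) (k : ℕ) : Finset (Fin n) :=
  Finset.univ.filter (fun j => (i : ℕ) ≤ (j : ℕ) + k ∧ (j : ℕ) ≤ (i : ℕ) + 1 + k)

lemma mem_itv_iff {i j : Fin n} {k : ℕ} :
    j ∈ itv i k ↔ (i : ℕ) ≤ (j : ℕ) + k ∧ (j : ℕ) ≤ (i : ℕ) + 1 + k := by
  simp [itv]

lemma grow_itv (i : Fin n) (k : ℕ) : grow (itv i k) ⊆ itv i (k + 1) := by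
  intro j hj
  simp only [grow, Finset.mem_filter, Finset.mem_univ, true_and] at hj
  obtain ⟨a, ha, h1, h2⟩ := hj
  rw [mem_itv_iff] at ha
  rw [mem_itv_iff]
  omega

lemma supp_conj_layers (i : Fin n) :
    ∀ (Us : List (Matrix (Fin n → Fin 2) (Fin n → Fin 2) ℂ))
      (A : Matrix (Fin n → Fin 2) (Fin n → Fin 2) ℂ) (k : ℕ),
    (∀ V ∈ Us, IsBrickWallLayer V) → Supp (itv i k) A →
    Supp (itv i (k + Us.length)) (star Us.prod * A * Us.prod) := by
  intro Us
  induction Us with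
  | nil =>
    intro A k _ hA
    simpa using hA
  | cons V rest ih =>
    intro A k hlay hA
    have key : star ((V :: rest).prod) * A * (V :: rest).prod
        = star rest.prod * (star V * A * V) * rest.prod := by
      rw [List.prod_cons, Matrix.star_mul]
      noncomm_ring
    rw [key]
    have h1 : Supp (itv i (k + 1)) (star V * A * V) :=
      supp_mono (grow_itv i k) (supp_conj_layer (hlay V (List.mem_cons_self)) hA)
    have h2 := ih (star V * A * V) (k + 1)
      (fun W hW => hlay W (List.mem_cons_of_mem V hW)) h1
    have e : k + (V :: rest).length = k + 1 + rest.length := by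
      rw [List.length_cons]; omega
    rw [e]
    exact h2

lemma self_mem_itv (i : Fin n) (k : ℕ) : i ∈ itv i k := by
  rw [mem_itv_iff]; omega

lemma supp_X_itv (i : Fin n) : Supp (itv i 0) (pauliX n i) := by
  apply supp_pauliString
  intro j hj
  have hij : j ≠ i := fun hc => hj (hc ▸ self_mem_itv i 0)
  rw [Function.update_of_ne hij]

lemma supp_ZZ_itv (i : Fin n) (h : (i : ℕ) + 1 < n) :
    Supp (itv i 0) (pauliZ n i * pauliZ n ⟨(i : ℕ) + 1, h⟩) := by
  apply supp_mul
  · apply supp_pauliString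
    intro j hj
    have hij : j ≠ i := fun hc => hj (hc ▸ self_mem_itv i 0)
    rw [Function.update_of_ne hij]
  · apply supp_pauliString
    intro j hj
    have hmem : (⟨(i : ℕ) + 1, h⟩ : Fin n) ∈ itv i 0 := by
      rw [mem_itv_iff]; simp
    have hij : j ≠ ⟨(i : ℕ) + 1, h⟩ := fun hc => hj (hc ▸ hmem)
    rw [Function.update_of_ne hij]

lemma card_itv (i : Fin n) (k : ℕ) : (itv i k).card ≤ 2 + 2 * k := by
  have h1 : (itv i k).card ≤ (Finset.Icc ((i : ℕ) - k) ((i : ℕ) + 1 + k)).card := by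
    refine Finset.card_le_card_of_injOn (fun j => (j : ℕ)) ?_ ?_
    · intro j hj
      rw [Finset.mem_coe, mem_itv_iff] at hj
      simp only [Finset.mem_coe, Finset.mem_Icc]
      omega
    · intro a _ b _ hab
      exact Fin.val_injective hab
  rw [Nat.card_Icc] at h1
  omega

/-- Conjugating the transverse-field Ising Hamiltonian by a product of `l`
brick-wall layers produces an operator containing at most `n · 4^{2+2l}` Pauli strings. -/
theorem ising_brickwall_pauli_count (n : ℕ) (hn : 2 ≤ n) (J g : ℝ) (l : ℕ)
    (Us : List (Matrix (Fin n → Fin 2) (Fin n → Fin 2) ℂ))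
    (hlen : Us.length = l) (hlayers : ∀ V ∈ Us, IsBrickWallLayer V) :
    Nat.card {P : Fin n → Fin 4 //
        (pauliString n P * (star Us.prod * isingHamiltonian n J g * Us.prod)).trace ≠ 0}
      ≤ n * 4 ^ (2 + 2 * l) := by
  classical
  subst hlen
  set L := Us.length with hL
  set T1 : Fin n → Matrix (Fin n → Fin 2) (Fin n → Fin 2) ℂ :=
    fun i => if h : (i : ℕ) + 1 < n then pauliZ n i * pauliZ n ⟨(i : ℕ) + 1, h⟩ else 0 with hT1
  have hsuppT1 : ∀ i : Fin n, Supp (itv i L) (star Us.prod * T1 i * Us.prod) := by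
    intro i
    have h0 : Supp (itv i 0) (T1 i) := by
      by_cases h : (i : ℕ) + 1 < n
      · simp only [hT1, dif_pos h]
        exact supp_ZZ_itv i h
      · simp only [hT1, dif_neg h]
        exact supp_zero _
    have := supp_conj_layers i Us (T1 i) 0 hlayers h0
    simpa using this
  have hsuppX : ∀ i : Fin n, Supp (itv i L) (star Us.prod * pauliX n i * Us.prod) := by
    intro i
    have := supp_conj_layers i Us (pauliX n i) 0 hlayers (supp_X_itv i)
    simpa using this
  have hexp : ∀ P : Fin n → Fin 4,
      (pauliString n P * (star Us.prod * isingHamiltonian n J g * Us.prod)).trace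
      = (-(J : ℂ)) * ((∑ i : Fin n,
            (pauliString n P * (star Us.prod * T1 i * Us.prod)).trace)
          + (g : ℂ) * ∑ i : Fin n,
            (pauliString n P * (star Us.prod * pauliX n i * Us.prod)).trace) := by
    intro P
    simp only [isingHamiltonian, hT1, Matrix.mul_smul, Matrix.smul_mul, Matrix.mul_add,
      Matrix.add_mul, Matrix.mul_sum, Matrix.sum_mul, Matrix.trace_smul, Matrix.trace_add,
      Matrix.trace_sum, smul_eq_mul]
  have hkey : ∀ P : Fin n → Fin 4,
      (pauliString n P * (star Us.prod * isingHamiltonian n J g * Us.prod)).trace ≠ 0 →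
      ∃ i : Fin n, ∀ j ∉ itv i L, P j = 0 := by
    intro P hP
    rw [hexp P] at hP
    have hP2 : (∑ i : Fin n, (pauliString n P * (star Us.prod * T1 i * Us.prod)).trace) ≠ 0
        ∨ (∑ i : Fin n, (pauliString n P * (star Us.prod * pauliX n i * Us.prod)).trace) ≠ 0 := by
      by_contra hc
      push_neg at hc
      rw [hc.1, hc.2] at hP
      simp at hP
    rcases hP2 with h | h
    · obtain ⟨i, _, hi⟩ := Finset.exists_ne_zero_of_sum_ne_zero h
      refine ⟨i, fun j hj => ?_⟩
      by_contra hPj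
      exact hi (trace_pauliString_eq_zero (hsuppT1 i) hj hPj)
    · obtain ⟨i, _, hi⟩ := Finset.exists_ne_zero_of_sum_ne_zero h
      refine ⟨i, fun j hj => ?_⟩
      by_contra hPj
      exact hi (trace_pauliString_eq_zero (hsuppX i) hj hPj)
  have hcardeq : Nat.card {P : Fin n → Fin 4 //
      (pauliString n P * (star Us.prod * isingHamiltonian n J g * Us.prod)).trace ≠ 0}
      = (Finset.univ.filter (fun P : Fin n → Fin 4 =>
          (pauliString n P * (star Us.prod * isingHamiltonian n J g * Us.prod)).trace ≠ 0)).card := by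
    rw [Nat.card_eq_fintype_card, Fintype.card_subtype]
  rw [hcardeq]
  have hsub : (Finset.univ.filter (fun P : Fin n → Fin 4 =>
      (pauliString n P * (star Us.prod * isingHamiltonian n J g * Us.prod)).trace ≠ 0))
      ⊆ Finset.univ.biUnion (fun i : Fin n =>
          Finset.univ.filter (fun P : Fin n → Fin 4 => ∀ j ∉ itv i L, P j = 0)) := by
    intro P hP
    rw [Finset.mem_filter] at hP
    obtain ⟨i, hi⟩ := hkey P hP.2
    exact Finset.mem_biUnion.mpr ⟨i, Finset.mem_univ i,
      Finset.mem_filter.mpr ⟨Finset.mem_univ P, hi⟩⟩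
  have hone : ∀ i : Fin n, (Finset.univ.filter (fun P : Fin n → Fin 4 =>
      ∀ j ∉ itv i L, P j = 0)).card ≤ 4 ^ (2 + 2 * L) := by
    intro i
    have h1 : (Finset.univ.filter (fun P : Fin n → Fin 4 =>
        ∀ j ∉ itv i L, P j = 0)).card
        ≤ Fintype.card ({j : Fin n // j ∈ itv i L} → Fin 4) := by
      rw [← Finset.card_univ]
      refine Finset.card_le_card_of_injOn
        (fun P => fun j : {j : Fin n // j ∈ itv i L} => P j.1)
        (fun _ _ => Finset.mem_univ _) ?_
      intro P hP Q hQ hPQ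
      simp only [Finset.coe_filter, Set.mem_setOf_eq, Finset.mem_univ, true_and] at hP hQ
      funext j
      by_cases hj : j ∈ itv i L
      · exact congrFun hPQ ⟨j, hj⟩
      · rw [hP j hj, hQ j hj]
    have h2 : Fintype.card ({j : Fin n // j ∈ itv i L} → Fin 4)
        = 4 ^ (itv i L).card := by
      rw [Fintype.card_fun]
      simp [Fintype.card_coe]
    calc (Finset.univ.filter (fun P : Fin n → Fin 4 => ∀ j ∉ itv i L, P j = 0)).card
        ≤ 4 ^ (itv i L).card := by rw [← h2]; exact h1
      _ ≤ 4 ^ (2 + 2 * L) := Nat.pow_le_pow_right (by norm_num) (card_itv i L)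
  calc (Finset.univ.filter (fun P : Fin n → Fin 4 =>
      (pauliString n P * (star Us.prod * isingHamiltonian n J g * Us.prod)).trace ≠ 0)).card
      ≤ (Finset.univ.biUnion (fun i : Fin n =>
          Finset.univ.filter (fun P : Fin n → Fin 4 => ∀ j ∉ itv i L, P j = 0))).card :=
        Finset.card_le_card hsub
    _ ≤ ∑ i : Fin n, (Finset.univ.filter (fun P : Fin n → Fin 4 =>
          ∀ j ∉ itv i L, P j = 0)).card := Finset.card_biUnion_le
    _ ≤ ∑ _i : Fin n, 4 ^ (2 + 2 * L) := Finset.sum_le_sum (fun i _ => hone i)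
    _ = n * 4 ^ (2 + 2 * L) := by
        rw [Finset.sum_const, Finset.card_univ, Fintype.card_fin, smul_eq_mul]
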